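/- Let C : ℝⁿ → ℝ be a quadratic polynomial with gradient J ≠ 0 at z and Hessian H. If ‖J‖⁴ ≥ 2·|C(z)|·|J H Jᵀ|, then the geometric error satisfies ‖ε^G‖ ≤ 2‖ε^S‖ = 2|C(z)|/‖J‖, where ε^G is a minimum-norm solution of C(z+ε)=0 and ε^S the minimum-norm solution of the linearized constraint. -/

import Mathlib

open Matrix

/-- The Euclidean norm of a vector in `ℝⁿ`. -/
noncomputable def euclNorm {n : ℕ} (v : Fin n → ℝ) : ℝ :=
  Real.sqrt (∑ i, v i ^ 2)

lemma euclNorm_nonneg {n : ℕ} (v : Fin n → ℝ) : 0 ≤ euclNorm v :=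
  Real.sqrt_nonneg _

lemma euclNorm_sq {n : ℕ} (v : Fin n → ℝ) : euclNorm v ^ 2 = ∑ i, v i ^ 2 :=
  Real.sq_sqrt (Finset.sum_nonneg fun _ _ => sq_nonneg _)

lemma dot_self_eq {n : ℕ} (v : Fin n → ℝ) : v ⬝ᵥ v = ∑ i, v i ^ 2 := by
  simp [dotProduct, sq]

lemma euclNorm_pos {n : ℕ} {v : Fin n → ℝ} (hv : v ≠ 0) : 0 < euclNorm v := by
  rcases Function.ne_iff.mp hv with ⟨i, hi⟩
  refine Real.sqrt_pos.mpr (Finset.sum_pos' (fun _ _ => sq_nonneg _) ⟨i, Finset.mem_univ i, ?_⟩)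
  have : v i ≠ 0 := hi
  positivity

lemma euclNorm_smul {n : ℕ} (a : ℝ) (v : Fin n → ℝ) :
    euclNorm (a • v) = |a| * euclNorm v := by
  unfold euclNorm
  rw [show ∑ i, (a • v) i ^ 2 = a ^ 2 * ∑ i, v i ^ 2 by
    rw [Finset.mul_sum]; exact Finset.sum_congr rfl fun i _ => by simp [mul_pow]]
  rw [Real.sqrt_mul (sq_nonneg a), Real.sqrt_sq_eq_abs]

lemma cauchy {n : ℕ} (v w : Fin n → ℝ) : |v ⬝ᵥ w| ≤ euclNorm v * euclNorm w := by
  have h := Finset.sum_mul_sq_le_sq_mul_sq Finset.univ v w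
  have h2 : |v ⬝ᵥ w| ^ 2 ≤ (euclNorm v * euclNorm w) ^ 2 := by
    rw [sq_abs, mul_pow, euclNorm_sq, euclNorm_sq]; exact h
  exact (pow_le_pow_iff_left₀ (abs_nonneg _) (mul_nonneg (euclNorm_nonneg v) (euclNorm_nonneg w)) two_ne_zero).mp h2

/-- For a quadratic constraint `C` with gradient `J ≠ 0` at `z` and Hessian `H`:
if `‖J‖⁴ ≥ 2 |C z| |J H Jᵀ|`, then the geometric error satisfies
`‖ε^G‖ ≤ 2 ‖ε^S‖ = 2 |C z| / ‖J‖`, where `ε^G` is a minimum-norm solution of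
`C (z + ε) = 0` and `ε^S` the minimum-norm solution of the linearized constraint. -/
theorem stmt4 {n : ℕ} (C : (Fin n → ℝ) → ℝ) (z J : Fin n → ℝ)
    (H : Matrix (Fin n) (Fin n) ℝ) (hH : H.IsSymm)
    (hTaylor : ∀ ε, C (z + ε) = C z + J ⬝ᵥ ε + (1 / 2) * (ε ⬝ᵥ H.mulVec ε))
    (hJ0 : J ≠ 0)
    (hcond : euclNorm J ^ 4 ≥ 2 * |C z| * |J ⬝ᵥ H.mulVec J|)
    (εG : Fin n → ℝ) (hG : C (z + εG) = 0)
    (hGmin : ∀ ε, C (z + ε) = 0 → euclNorm εG ≤ euclNorm ε)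
    (εS : Fin n → ℝ) (hS : C z + J ⬝ᵥ εS = 0)
    (hSmin : ∀ ε, C z + J ⬝ᵥ ε = 0 → euclNorm εS ≤ euclNorm ε) :
    euclNorm εG ≤ 2 * euclNorm εS ∧ euclNorm εS = |C z| / euclNorm J := by
  set nJ := euclNorm J with hnJ
  have hnJpos : 0 < nJ := euclNorm_pos hJ0
  have hJJ : J ⬝ᵥ J = nJ ^ 2 := by rw [dot_self_eq, hnJ, euclNorm_sq]
  set c := C z with hc
  set a := J ⬝ᵥ H.mulVec J with ha
  -- Part 2: norm of εS
  have hεS : euclNorm εS = |c| / nJ := by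
    have hupper : euclNorm εS ≤ |c| / nJ := by
      have hsol : C z + J ⬝ᵥ ((-c / nJ ^ 2) • J) = 0 := by
        rw [dotProduct_smul, smul_eq_mul, hJJ]
        field_simp
        linarith [hc]
      have := hSmin _ hsol
      rwa [euclNorm_smul, abs_div, abs_neg, abs_pow, abs_of_pos hnJpos,
        show |c| / nJ ^ 2 * nJ = |c| / nJ by field_simp] at this
    have hlower : |c| / nJ ≤ euclNorm εS := by
      have h1 : J ⬝ᵥ εS = -c := by linarith [hS]
      have h2 : |c| ≤ nJ * euclNorm εS := by
        have := cauchy J εS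
        rw [h1, abs_neg] at this
        exact this
      rw [div_le_iff₀ hnJpos]
      linarith [h2]
    linarith
  refine ⟨?_, hεS⟩
  -- Part 1: restrict to the line spanned by J
  set f : ℝ → ℝ := fun t => c + t * nJ ^ 2 + (1 / 2) * (t ^ 2 * a) with hf
  have hfval : ∀ t : ℝ, C (z + t • J) = f t := by
    intro t
    rw [hTaylor, dotProduct_smul, smul_eq_mul, hJJ]
    have : (t • J) ⬝ᵥ H.mulVec (t • J) = t ^ 2 * a := by
      rw [Matrix.mulVec_smul, dotProduct_smul, smul_dotProduct, smul_eq_mul, smul_eq_mul, ha]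
      ring
    rw [this]
  set t0 : ℝ := -2 * c / nJ ^ 2 with ht0
  have hnJ2 : (0:ℝ) < nJ ^ 2 := by positivity
  have hnJ4 : (0:ℝ) < nJ ^ 4 := by positivity
  have hcond' : 2 * |c| * |a| ≤ nJ ^ 4 := hcond
  have habs : |2 * c * a| ≤ nJ ^ 4 := by
    rw [abs_mul, abs_mul, abs_two]
    exact hcond'
  have hca1 : 2 * c * a ≤ nJ ^ 4 := le_trans (le_abs_self _) habs
  have hca2 : -(nJ ^ 4) ≤ 2 * c * a := by
    have := neg_abs_le (2 * c * a); linarith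
  have hft0 : f t0 * nJ ^ 4 = -c * nJ ^ 4 + 2 * a * c ^ 2 := by
    rw [hf, ht0]
    field_simp
    ring
  have hsign : f 0 * f t0 ≤ 0 := by
    have hf0 : f 0 = c := by simp [hf]
    have key : (f 0 * f t0) * nJ ^ 4 ≤ 0 := by
      rw [hf0, mul_assoc, hft0]
      nlinarith [sq_nonneg c, sq_abs c]
    nlinarith [key, hnJ4]
  have hcont : ContinuousOn f (Set.uIcc 0 t0) := by
    apply Continuous.continuousOn
    fun_prop
  have h0mem : (0:ℝ) ∈ Set.uIcc (f 0) (f t0) := by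
    rw [Set.mem_uIcc]
    rcases mul_nonpos_iff.mp hsign with ⟨h1, h2⟩ | ⟨h1, h2⟩
    · right; exact ⟨h2, h1⟩
    · left; exact ⟨h1, h2⟩
  obtain ⟨t, htmem, htroot⟩ := intermediate_value_uIcc hcont h0mem
  have htabs : |t| ≤ |t0| := by
    rw [Set.mem_uIcc] at htmem
    rcases htmem with ⟨h1, h2⟩ | ⟨h1, h2⟩
    · rw [abs_le]
      constructor
      · linarith [neg_abs_le t0, h1, abs_nonneg t0]
      · linarith [le_abs_self t0]
    · rw [abs_le]
      constructor
      · linarith [neg_abs_le t0]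
      · linarith [le_abs_self t0, abs_nonneg t0]
  have ht0abs : |t0| = 2 * |c| / nJ ^ 2 := by
    rw [ht0, abs_div, abs_mul, abs_neg, abs_two, abs_pow, abs_of_pos hnJpos]
  have hroot : C (z + t • J) = 0 := by rw [hfval, htroot]
  have := hGmin _ hroot
  rw [euclNorm_smul] at this
  calc euclNorm εG ≤ |t| * nJ := this
    _ ≤ (2 * |c| / nJ ^ 2) * nJ := by
        apply mul_le_mul_of_nonneg_right _ hnJpos.le
        rw [← ht0abs]; exact htabs
    _ = 2 * (|c| / nJ) := by field_simp
    _ = 2 * euclNorm εS := by rw [hεS]
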